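/- Let a, b ∈ ℝ with a > 0, and let γ : ℝ → ℂ be the logarithmic spiral γ(u) = exp((a + b·i)·u). Then there exists a real number C ≥ 1 such that for all real s ≤ t, ∫ₛᵗ ‖(a + b·i)·exp((a + b·i)·u)‖ du ≤ C·‖γ(t) − γ(s)‖; equivalently, (√(a² + b²)/a)·(e^{a t} − e^{a s}) ≤ C·‖exp((a+b·i)t) − exp((a+b·i)s)‖. -/

import Mathlib

/-- Logarithmic spirals are Lavrentiev (chord-arc) curves: for `γ(u) = exp((a+bi)u)` with
`a > 0` there is `C ≥ 1` bounding the arclength of every subarc by `C` times the distance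
between its endpoints. -/
theorem logarithmic_spiral_is_lavrentiev (a b : ℝ) (ha : 0 < a) :
    ∃ C : ℝ, 1 ≤ C ∧ ∀ s t : ℝ, s ≤ t →
      (∫ u in s..t, ‖((a : ℂ) + (b : ℂ) * Complex.I) *
          Complex.exp (((a : ℂ) + (b : ℂ) * Complex.I) * (u : ℂ))‖) ≤
        C * ‖Complex.exp (((a : ℂ) + (b : ℂ) * Complex.I) * (t : ℂ)) -
          Complex.exp (((a : ℂ) + (b : ℂ) * Complex.I) * (s : ℂ))‖ := by
  set z : ℂ := (a : ℂ) + (b : ℂ) * Complex.I with hz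
  have haz : a ≤ ‖z‖ := by
    have : |z.re| ≤ ‖z‖ := Complex.abs_re_le_norm z
    simpa [hz, abs_of_pos ha] using this
  refine ⟨‖z‖ / a, ?_, ?_⟩
  · rw [le_div_iff₀ ha, one_mul]; exact haz
  · intro s t hst
    have hnormexp : ∀ u : ℝ, ‖Complex.exp (z * u)‖ = Real.exp (a * u) := by
      intro u
      rw [Complex.norm_exp]
      congr 1
      simp [hz, Complex.mul_re]
    have hintegrand : ∀ u : ℝ, ‖z * Complex.exp (z * u)‖ = ‖z‖ * Real.exp (a * u) := by
      intro u; rw [norm_mul, hnormexp]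
    have hint : (∫ u in s..t, ‖z * Complex.exp (z * u)‖)
        = ‖z‖ * ((Real.exp (a * t) - Real.exp (a * s)) / a) := by
      simp only [hintegrand]
      rw [intervalIntegral.integral_const_mul]
      have := intervalIntegral.integral_comp_mul_left (fun u => Real.exp u)
        (ne_of_gt ha) (a := s) (b := t)
      rw [this, integral_exp, smul_eq_mul]
      ring
    have hchord : Real.exp (a * t) - Real.exp (a * s)
        ≤ ‖Complex.exp (z * t) - Complex.exp (z * s)‖ := by
      calc Real.exp (a * t) - Real.exp (a * s)
          = ‖Complex.exp (z * t)‖ - ‖Complex.exp (z * s)‖ := by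
            rw [hnormexp, hnormexp]
        _ ≤ ‖Complex.exp (z * t) - Complex.exp (z * s)‖ := norm_sub_norm_le _ _
    rw [hint]
    have hC : 0 ≤ ‖z‖ / a := div_nonneg (norm_nonneg z) ha.le
    calc ‖z‖ * ((Real.exp (a * t) - Real.exp (a * s)) / a)
        = (‖z‖ / a) * (Real.exp (a * t) - Real.exp (a * s)) := by ring
      _ ≤ (‖z‖ / a) * ‖Complex.exp (z * t) - Complex.exp (z * s)‖ :=
          mul_le_mul_of_nonneg_left hchord hC
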